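/- Let F be a crossing family over V and σ a partial signing. Suppose an unsigned element v is forced positive by U ∈ F (v ∈ U, all of U\{v} signed negative, |U| ≥ 2) and forced negative by W ∈ F (v ∉ W, all of V\(W ∪ {v}) signed positive, |V\W| ≥ 2). Then U ∩ W ∈ F, U ∩ W ≠ ∅, and every element of U ∩ W is signed negative. -/
import Mathlib


/-- Let `F` be a crossing family over a finite set `V` and `σ` a partial
signing (`none` = unsigned, `some true` = `+`, `some false` = `−`). Suppose the unsigned
element `v` is forced positive by `U ∈ F` (`v ∈ U`, all of `U \ {v}` signed negative,
`|U| ≥ 2`) and forced negative by `W ∈ F` (`v ∉ W`, all of `V \ (W ∪ {v})` signed positive,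
`|V \ W| ≥ 2`). Then `U ∩ W ≠ ∅`, `U ∪ W ≠ V` (hence `U ∩ W ∈ F`), and every element of
`U ∩ W` is signed negative. -/
theorem stmt_16 {V : Type*} [Fintype V] (F : Set (Set V))
    (hF : ∀ U ∈ F, U ≠ ∅ ∧ U ≠ Set.univ)
    (hcross : ∀ U ∈ F, ∀ W ∈ F, (U ∩ W).Nonempty → U ∪ W ≠ Set.univ →
      U ∩ W ∈ F ∧ U ∪ W ∈ F)
    (σ : V → Option Bool) (v : V) (hv : σ v = none)
    (U W : Set V) (hU : U ∈ F) (hW : W ∈ F)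
    (hvU : v ∈ U) (hUcard : 2 ≤ U.ncard)
    (hUneg : ∀ u ∈ U, u ≠ v → σ u = some false)
    (hvW : v ∉ W) (hWcard : 2 ≤ (Wᶜ : Set V).ncard)
    (hWpos : ∀ x, x ∉ W → x ≠ v → σ x = some true) :
    (U ∩ W).Nonempty ∧ U ∪ W ≠ Set.univ ∧ U ∩ W ∈ F ∧
      ∀ x ∈ U ∩ W, σ x = some false := by
  -- get u ∈ U with u ≠ v
  obtain ⟨a, b, ha, hb, hab⟩ := (Set.one_lt_ncard_iff (Set.toFinite _)).mp hUcard
  have hexU : ∃ u ∈ U, u ≠ v := by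
    by_cases hav : a = v
    · exact ⟨b, hb, fun h => hab (h ▸ hav ▸ rfl)⟩
    · exact ⟨a, ha, hav⟩
  obtain ⟨u, huU, huv⟩ := hexU
  -- u ∈ W
  have huW : u ∈ W := by
    by_contra h
    have := hWpos u h huv
    rw [hUneg u huU huv] at this
    simp at this
  -- get w ∉ W with w ≠ v
  obtain ⟨c, d, hc, hd, hcd⟩ := (Set.one_lt_ncard_iff (Set.toFinite _)).mp hWcard
  have hexW : ∃ w, w ∉ W ∧ w ≠ v := by
    by_cases hcv : c = v
    · exact ⟨d, hd, fun h => hcd (h ▸ hcv ▸ rfl)⟩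
    · exact ⟨c, hc, hcv⟩
  obtain ⟨w, hwW, hwv⟩ := hexW
  have hwU : w ∉ U := by
    intro h
    have := hUneg w h hwv
    rw [hWpos w hwW hwv] at this
    simp at this
  have hne : (U ∩ W).Nonempty := ⟨u, huU, huW⟩
  have huniv : U ∪ W ≠ Set.univ := by
    intro h
    have : w ∈ U ∪ W := h ▸ Set.mem_univ w
    rcases this with h' | h'
    · exact hwU h'
    · exact hwW h'
  refine ⟨hne, huniv, (hcross U hU W hW hne huniv).1, ?_⟩
  rintro x ⟨hxU, hxW⟩
  exact hUneg x hxU (fun h => hvW (h ▸ hxW))
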